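/- Let d, n ≥ 1 and let Q, L ≥ 1 be integers with T = QL. Let K ⊆ [0,1]^d be convex and downward-closed with 0 ∈ K, with ‖y‖ ≤ R for all y ∈ K. For each q ∈ {1,…,Q}, i ∈ {1,…,n} and k ∈ {1,…,L}, let v_{q,k}^i ∈ K, and define x_{q,1}^i = 0 and x_{q,k+1}^i = x_{q,k}^i + (1/L)·v_{q,k}^i ⊙ (1 − x_{q,k}^i), and set x_q^i = x_{q,L+1}^i. For each t ∈ {1,…,T} and j ∈ {1,…,n}, let f_t^j : ℝ^d → ℝ be continuous DR-submodular and nonnegative on X = [0,1]^d, differentiable on X with ‖∇f_t^j(x) − ∇f_t^j(y)‖ ≤ β‖x − y‖ and ‖∇f_t^j(x)‖ ≤ G for all x, y ∈ X. Write T_q = {(q−1)L+1, …, qL}. Then for every i ∈ {1,…,n} and every x ∈ K: Σ_{q=1}^{Q} Σ_{t ∈ T_q} ( (1/e)·Σ_{j=1}^n f_t^j(x) − Σ_{j=1}^n f_t^j(x_q^i) ) ≤ Σ_{k=1}^L (1 − 1/L)^{L−k} Σ_{q=1}^{Q} Σ_{j=1}^n ⟨ (1/L)·Σ_{t ∈ T_q}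 ∇f_t^j(x_{q,k}^j) ⊙ (x_{q,k}^j − 1), v_{q,k}^i − x ⟩ + 4(β + G)R · Σ_{k=1}^L Σ_{q=1}^{Q} Σ_{j=1}^n ‖v_{q,k}^j − v_{q,k}^i‖ + nβTR²/(2L). -/

import Mathlib

open MeasureTheory Finset

noncomputable section

/-- The unit cube `[0,1]^d` in `ℝ^d` (with Euclidean structure). -/
def cube (d : ℕ) : Set (EuclideanSpace ℝ (Fin d)) :=
  {x | ∀ i, x i ∈ Set.Icc (0 : ℝ) 1}

/-- Coordinatewise (Hadamard) product on `ℝ^d`. -/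
def had {d : ℕ} (x y : EuclideanSpace ℝ (Fin d)) : EuclideanSpace ℝ (Fin d) :=
  WithLp.toLp 2 (fun i => x i * y i)

/-- The all-ones vector in `ℝ^d`. -/
def onesV (d : ℕ) : EuclideanSpace ℝ (Fin d) := WithLp.toLp 2 (fun _ => 1)

/-- `K ⊆ ℝ^d` is downward closed (relative to the nonnegative orthant): together with any
`y ∈ K` it contains every `x` with `0 ≤ x ≤ y` coordinatewise. -/
def DownwardClosed (d : ℕ) (K : Set (EuclideanSpace ℝ (Fin d))) : Prop :=
  ∀ y ∈ K, ∀ x : EuclideanSpace ℝ (Fin d), (∀ i, 0 ≤ x i) → (∀ i, x i ≤ y i) → x ∈ K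

/-- `f` is continuous DR-submodular on the unit cube `[0,1]^d`. -/
def DRSubmodularOn (d : ℕ) (f : EuclideanSpace ℝ (Fin d) → ℝ) : Prop :=
  ∀ x y : EuclideanSpace ℝ (Fin d), x ∈ cube d → y ∈ cube d → (∀ i, x i ≤ y i) →
    ∀ (j : Fin d) (z : ℝ), 0 ≤ z →
      x + z • EuclideanSpace.single j (1 : ℝ) ∈ cube d →
      y + z • EuclideanSpace.single j (1 : ℝ) ∈ cube d →
      f (y + z • EuclideanSpace.single j (1 : ℝ)) - f y ≤
        f (x + z • EuclideanSpace.single j (1 : ℝ)) - f x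

set_option maxHeartbeats 1000000

open InnerProductSpace RealInnerProductSpace

section AuxMFW
open Set Topology Filter
abbrev E (d : ℕ) := EuclideanSpace ℝ (Fin d)
variable {d : ℕ}

lemma cube_convex : Convex ℝ (cube d) := by
  intro x hx y hy a b ha hb hab i
  have hxi := hx i; have hyi := hy i
  simp only [Set.mem_Icc] at *
  have hco : (a • x + b • y) i = a * x i + b * y i := by
    simp [PiLp.add_apply, PiLp.smul_apply, smul_eq_mul]
  rw [hco]
  constructor
  · exact add_nonneg (mul_nonneg ha hxi.1) (mul_nonneg hb hyi.1)
  · calc a * x i + b * y i ≤ a * 1 + b * 1 :=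
        add_le_add (mul_le_mul_of_nonneg_left hxi.2 ha) (mul_le_mul_of_nonneg_left hyi.2 hb)
      _ = 1 := by rw [mul_one, mul_one, hab]

lemma norm_le_norm_of_abs_le {u w : E d} (h : ∀ i, |u i| ≤ |w i|) : ‖u‖ ≤ ‖w‖ := by
  rw [EuclideanSpace.norm_eq, EuclideanSpace.norm_eq]
  apply Real.sqrt_le_sqrt
  apply Finset.sum_le_sum
  intro i _
  simp only [Real.norm_eq_abs]
  exact pow_le_pow_left₀ (abs_nonneg _) (h i) 2

lemma hasDerivWithinAt_comp_line {f : E d → ℝ} {g : E d} {x u : E d} {s : Set ℝ} {t : ℝ}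
    (hg : HasGradientWithinAt f g (cube d) (x + t • u))
    (hmaps : ∀ r ∈ s, x + r • u ∈ cube d) :
    HasDerivWithinAt (fun r : ℝ => f (x + r • u)) (⟪g, u⟫_ℝ) s t := by
  have hγ : HasDerivWithinAt (fun r : ℝ => x + r • u) u s t := by
    simpa using ((hasDerivWithinAt_id t s).smul_const u).const_add x
  have h2 := (hg.hasFDerivWithinAt).comp_hasDerivWithinAt t hγ (fun r hr => hmaps r hr)
  exact h2

lemma nonneg_of_hasDerivWithinAt_left {D : ℝ → ℝ} {c ε : ℝ} (hε : 0 < ε)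
    (hD : HasDerivWithinAt D c (Icc 0 ε) 0) (h0 : D 0 = 0)
    (hpos : ∀ r ∈ Icc (0:ℝ) ε, 0 ≤ D r) : 0 ≤ c := by
  have hD' : HasDerivWithinAt D c (Ioc 0 ε) 0 := hD.mono Ioc_subset_Icc_self
  have hset : Ioc 0 ε \ {0} = Ioc 0 ε := by
    ext z; simp only [Set.mem_diff, Set.mem_singleton_iff, Set.mem_Ioc, and_iff_left_iff_imp]
    rintro ⟨h1, _⟩; exact ne_of_gt h1
  rw [hasDerivWithinAt_iff_tendsto_slope, hset] at hD'
  haveI : (𝓝[Ioc 0 ε] (0:ℝ)).NeBot :=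
    mem_closure_iff_nhdsWithin_neBot.mp (by
      rw [closure_Ioc hε.ne]; exact left_mem_Icc.mpr hε.le)
  refine ge_of_tendsto hD' ?_
  filter_upwards [self_mem_nhdsWithin] with z hz
  have hz0 : 0 < z := hz.1
  have hs : slope D 0 z = D z / z := by simp [slope_def_field, h0]
  rw [hs]
  exact div_nonneg (hpos z ⟨hz0.le, hz.2⟩) hz0.le

/-- L1: gradient coordinates are antitone for DR-submodular functions. -/
lemma grad_coord_antitone {f : E d → ℝ} {f' : E d → E d}
    (hsub : DRSubmodularOn d f)
    (hgrad : ∀ y ∈ cube d, HasGradientWithinAt f (f' y) (cube d) y)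
    {x y : E d} (hx : x ∈ cube d) (hy : y ∈ cube d) (hxy : ∀ i, x i ≤ y i)
    {j : Fin d} (hyj : y j < 1) : f' y j ≤ f' x j := by
  have hε : 0 < 1 - y j := by linarith
  have hcoord : ∀ (w : E d) (r : ℝ) (i : Fin d),
      (w + r • EuclideanSpace.single j (1:ℝ)) i = w i + r * (if i = j then 1 else 0) := by
    intro w r i
    simp [PiLp.add_apply, PiLp.smul_apply, EuclideanSpace.single_apply, smul_eq_mul]
  have hmem : ∀ (w : E d), w ∈ cube d → w j ≤ y j → ∀ r ∈ Icc (0:ℝ) (1 - y j),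
      w + r • EuclideanSpace.single j (1:ℝ) ∈ cube d := by
    intro w hw hwj r hr i
    rcases eq_or_ne i j with heq | hij
    · subst heq
      have h : (w + r • EuclideanSpace.single i (1:ℝ)) i = w i + r := by
        rw [hcoord]; simp
      rw [Set.mem_Icc, h]
      exact ⟨by linarith [(hw i).1, hr.1], by linarith [hr.2, hwj]⟩
    · have h : (w + r • EuclideanSpace.single j (1:ℝ)) i = w i := by
        rw [hcoord]; simp [hij]
      rw [Set.mem_Icc, h]
      exact ⟨(hw i).1, (hw i).2⟩
  have hmx := hmem x hx (hxy j)
  have hmy := hmem y hy le_rfl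
  have dx : HasDerivWithinAt (fun r : ℝ => f (x + r • EuclideanSpace.single j (1:ℝ)))
      (⟪f' x, EuclideanSpace.single j (1:ℝ)⟫_ℝ) (Icc 0 (1 - y j)) 0 := by
    apply hasDerivWithinAt_comp_line (x := x)
    · have : x + (0:ℝ) • EuclideanSpace.single j (1:ℝ) = x := by simp
      rw [this]; exact hgrad x hx
    · exact hmx
  have dy : HasDerivWithinAt (fun r : ℝ => f (y + r • EuclideanSpace.single j (1:ℝ)))
      (⟪f' y, EuclideanSpace.single j (1:ℝ)⟫_ℝ) (Icc 0 (1 - y j)) 0 := by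
    apply hasDerivWithinAt_comp_line (x := y)
    · have : y + (0:ℝ) • EuclideanSpace.single j (1:ℝ) = y := by simp
      rw [this]; exact hgrad y hy
    · exact hmy
  have hsx : ⟪f' x, EuclideanSpace.single j (1:ℝ)⟫_ℝ = f' x j := by
    rw [EuclideanSpace.inner_single_right]; simp
  have hsy : ⟪f' y, EuclideanSpace.single j (1:ℝ)⟫_ℝ = f' y j := by
    rw [EuclideanSpace.inner_single_right]; simp
  rw [hsx] at dx; rw [hsy] at dy
  have hc : 0 ≤ f' x j - f' y j := by
    refine nonneg_of_hasDerivWithinAt_left hε ((dx.sub dy).sub_const (f x - f y)) (by simp) ?_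
    intro r hr
    have := hsub x y hx hy hxy j r hr.1 (hmx r hr) (hmy r hr)
    simp only [Pi.sub_apply]
    linarith
  linarith

lemma inner_sum_coords (v w : E d) : ⟪v, w⟫_ℝ = ∑ i, v i * w i := by
  simp [PiLp.inner_apply, RCLike.inner_apply, conj_trivial, mul_comm]

lemma coord_add_smul (x u : E d) (t : ℝ) (i : Fin d) : (x + t • u) i = x i + t * u i := by
  simp [PiLp.add_apply, PiLp.smul_apply, smul_eq_mul]

lemma inner_grad_antitone {f : E d → ℝ} {f' : E d → E d}
    (hsub : DRSubmodularOn d f)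
    (hgrad : ∀ y ∈ cube d, HasGradientWithinAt f (f' y) (cube d) y)
    {x y u : E d} (hx : x ∈ cube d) (hy : y ∈ cube d) (hxy : ∀ i, x i ≤ y i)
    (hu : ∀ i, 0 ≤ u i) (h1 : ∀ i, 0 < u i → y i < 1) :
    ⟪f' y, u⟫_ℝ ≤ ⟪f' x, u⟫_ℝ := by
  rw [inner_sum_coords, inner_sum_coords]
  apply Finset.sum_le_sum
  intro i _
  rcases (hu i).lt_or_eq with hp | hz
  · exact mul_le_mul_of_nonneg_right
      (grad_coord_antitone hsub hgrad hx hy hxy (h1 i hp)) (hu i)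
  · rw [← hz, mul_zero, mul_zero]

/-- L3 : first-order upper bound along a nonnegative direction. -/
lemma first_order_up {f : E d → ℝ} {f' : E d → E d}
    (hsub : DRSubmodularOn d f)
    (hgrad : ∀ y ∈ cube d, HasGradientWithinAt f (f' y) (cube d) y)
    {x u : E d} (hx : x ∈ cube d) (hu : ∀ i, 0 ≤ u i) (hxu : x + u ∈ cube d) :
    f (x + u) - f x ≤ ⟪f' x, u⟫_ℝ := by
  have hxui : ∀ i, x i + u i ≤ 1 := by
    intro i
    have := (hxu i).2
    simpa [PiLp.add_apply] using this
  have hmaps : ∀ t ∈ Icc (0:ℝ) 1, x + t • u ∈ cube d := by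
    intro t ht i
    rw [Set.mem_Icc, coord_add_smul]
    have h1 := (hx i).1
    constructor
    · nlinarith [hu i, ht.1]
    · nlinarith [hu i, ht.1, ht.2, hxui i]
  have hφ : ∀ t ∈ Icc (0:ℝ) 1, HasDerivWithinAt (fun r => f (x + r • u))
      (⟪f' (x + t • u), u⟫_ℝ) (Icc 0 1) t :=
    fun t ht => hasDerivWithinAt_comp_line (hgrad _ (hmaps t ht)) hmaps
  set c := (⟪f' x, u⟫_ℝ) with hc
  have hkey : ∀ t ∈ Ioo (0:ℝ) 1, HasDerivAt (fun r => c * r - f (x + r • u))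
      (c - ⟪f' (x + t • u), u⟫_ℝ) t := by
    intro t ht
    have h1 : HasDerivAt (fun r => f (x + r • u)) (⟪f' (x + t • u), u⟫_ℝ) t :=
      (hφ t ⟨ht.1.le, ht.2.le⟩).hasDerivAt (Icc_mem_nhds ht.1 ht.2)
    have h2 : HasDerivAt (fun r : ℝ => c * r) c t := by
      simpa using (hasDerivAt_id t).const_mul c
    exact h2.sub h1
  have hmono : MonotoneOn (fun t => c * t - f (x + t • u)) (Icc 0 1) := by
    apply monotoneOn_of_deriv_nonneg (convex_Icc 0 1)
    · apply ContinuousOn.sub (Continuous.continuousOn (by continuity))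
      exact fun t ht => ((hφ t ht).continuousWithinAt)
    · intro t ht
      rw [interior_Icc] at ht
      exact (hkey t ht).differentiableAt.differentiableWithinAt
    · intro t ht
      rw [interior_Icc] at ht
      rw [(hkey t ht).deriv]
      have hle : (⟪f' (x + t • u), u⟫_ℝ) ≤ c := by
        rw [hc]
        refine inner_grad_antitone hsub hgrad hx (hmaps t ⟨ht.1.le, ht.2.le⟩)
          (fun i => ?_) hu (fun i hui => ?_)
        · rw [coord_add_smul]; nlinarith [hu i, ht.1]
        · rw [coord_add_smul]; nlinarith [ht.2, hxui i]
      linarith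
  have h01 : (0:ℝ) ∈ Icc (0:ℝ) 1 := ⟨le_refl 0, zero_le_one⟩
  have h11 : (1:ℝ) ∈ Icc (0:ℝ) 1 := ⟨zero_le_one, le_refl 1⟩
  have hm := hmono h01 h11 zero_le_one
  simp only [mul_zero, mul_one, zero_smul, one_smul, add_zero] at hm
  linarith

/-- L4 : smoothness lower bound from Lipschitz gradients. -/
lemma smooth_lower {f : E d → ℝ} {f' : E d → E d} {β : ℝ}
    (hgrad : ∀ y ∈ cube d, HasGradientWithinAt f (f' y) (cube d) y)
    (hlip : ∀ y ∈ cube d, ∀ y' ∈ cube d, ‖f' y - f' y'‖ ≤ β * ‖y - y'‖)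
    {x y : E d} (hx : x ∈ cube d) (hy : y ∈ cube d) :
    f x + ⟪f' x, y - x⟫_ℝ - β / 2 * ‖y - x‖ ^ 2 ≤ f y := by
  set u := y - x with hu
  have hmaps : ∀ t ∈ Icc (0:ℝ) 1, x + t • u ∈ cube d := by
    intro t ht
    have : x + t • u = (1 - t) • x + t • y := by
      rw [hu]; module
    rw [this]
    exact cube_convex hx hy (by linarith [ht.2]) ht.1 (by ring)
  have hφ : ∀ t ∈ Icc (0:ℝ) 1, HasDerivWithinAt (fun r => f (x + r • u))
      (⟪f' (x + t • u), u⟫_ℝ) (Icc 0 1) t :=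
    fun t ht => hasDerivWithinAt_comp_line (hgrad _ (hmaps t ht)) hmaps
  set c := (⟪f' x, u⟫_ℝ) with hc
  have hkey : ∀ t ∈ Ioo (0:ℝ) 1, HasDerivAt
      (fun r => f (x + r • u) - c * r + β / 2 * r ^ 2 * ‖u‖ ^ 2)
      (⟪f' (x + t • u), u⟫_ℝ - c + β * t * ‖u‖ ^ 2) t := by
    intro t ht
    have h1 : HasDerivAt (fun r => f (x + r • u)) (⟪f' (x + t • u), u⟫_ℝ) t :=
      (hφ t ⟨ht.1.le, ht.2.le⟩).hasDerivAt (Icc_mem_nhds ht.1 ht.2)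
    have h2 : HasDerivAt (fun r : ℝ => c * r) c t := by
      simpa using (hasDerivAt_id t).const_mul c
    have h3 : HasDerivAt (fun r : ℝ => β / 2 * r ^ 2 * ‖u‖ ^ 2) (β * t * ‖u‖ ^ 2) t := by
      have := ((hasDerivAt_pow 2 t).const_mul (β / 2)).mul_const (‖u‖ ^ 2)
      exact this.congr_deriv (by ring)
    exact (h1.sub h2).add h3
  have hmono : MonotoneOn (fun r => f (x + r • u) - c * r + β / 2 * r ^ 2 * ‖u‖ ^ 2)
      (Icc 0 1) := by
    apply monotoneOn_of_deriv_nonneg (convex_Icc 0 1)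
    · apply ContinuousOn.add
      · apply ContinuousOn.sub (fun t ht => ((hφ t ht).continuousWithinAt))
        exact Continuous.continuousOn (continuous_const.mul continuous_id)
      · exact Continuous.continuousOn
          ((continuous_const.mul (continuous_pow 2)).mul continuous_const)
    · intro t ht
      rw [interior_Icc] at ht
      exact (hkey t ht).differentiableAt.differentiableWithinAt
    · intro t ht
      rw [interior_Icc] at ht
      rw [(hkey t ht).deriv]
      have hband : c - ⟪f' (x + t • u), u⟫_ℝ ≤ β * t * ‖u‖ ^ 2 := by
        have hsub : c - ⟪f' (x + t • u), u⟫_ℝ = ⟪f' x - f' (x + t • u), u⟫_ℝ := by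
          rw [hc, inner_sub_left]
        rw [hsub]
        calc ⟪f' x - f' (x + t • u), u⟫_ℝ ≤ ‖f' x - f' (x + t • u)‖ * ‖u‖ :=
              real_inner_le_norm _ _
          _ ≤ (β * ‖x - (x + t • u)‖) * ‖u‖ := by
              apply mul_le_mul_of_nonneg_right _ (norm_nonneg _)
              exact hlip x hx _ (hmaps t ⟨ht.1.le, ht.2.le⟩)
          _ = β * t * ‖u‖ ^ 2 := by
              have : x - (x + t • u) = -(t • u) := by abel
              rw [this, norm_neg, norm_smul, Real.norm_eq_abs, abs_of_pos ht.1]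
              ring
      linarith
  have hm := hmono ⟨le_refl 0, zero_le_one⟩ ⟨zero_le_one, le_refl 1⟩ zero_le_one
  simp only [mul_zero, mul_one, zero_smul, one_smul, add_zero, zero_pow, mul_zero,
    one_pow] at hm
  have e1 : x + u = y := by rw [hu]; abel
  rw [e1] at hm
  norm_num at hm
  linarith

/-- L5 : key lemma for non-monotone DR-submodular functions. -/
lemma key_lemma {f : E d → ℝ} {f' : E d → E d}
    (hsub : DRSubmodularOn d f)
    (hgrad : ∀ y ∈ cube d, HasGradientWithinAt f (f' y) (cube d) y)
    (hnonneg : ∀ y ∈ cube d, 0 ≤ f y)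
    {x w : E d} {m : ℝ} (hx : x ∈ cube d) (hw : w ∈ cube d)
    (hm0 : 0 ≤ m) (hm1 : m ≤ 1)
    (hxw : ∀ i, x i ≤ w i) (hb : ∀ i, w i - x i ≤ m * (1 - x i)) :
    (1 - m) * f x ≤ f w := by
  rcases eq_or_lt_of_le hm1 with hm1' | hm1'
  · rw [← hm1']; simpa using hnonneg w hw
  rcases eq_or_lt_of_le hm0 with hm0' | hm0'
  · have hwx : w = x := by
      ext i
      have h1 := hb i
      rw [← hm0', zero_mul] at h1
      exact le_antisymm (by linarith) (hxw i)
    rw [hwx, ← hm0']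
    nlinarith [hnonneg x hx]
  -- main case 0 < m < 1
  set u := w - x with hudef
  have hu : ∀ i, 0 ≤ u i := by
    intro i
    have : u i = w i - x i := by simp [hudef, PiLp.sub_apply]
    rw [this]; linarith [hxw i]
  have hui : ∀ i, u i ≤ m * (1 - x i) := by
    intro i
    have : u i = w i - x i := by simp [hudef, PiLp.sub_apply]
    rw [this]; exact hb i
  have hmaps : ∀ t ∈ Icc (0:ℝ) (1/m), x + t • u ∈ cube d := by
    intro t ht i
    rw [Set.mem_Icc, coord_add_smul]
    have h1 := (hx i).1; have h2 := (hx i).2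
    constructor
    · nlinarith [hu i, ht.1]
    · have htu : t * u i ≤ (1/m) * u i := mul_le_mul_of_nonneg_right ht.2 (hu i)
      have : (1/m) * u i ≤ (1/m) * (m * (1 - x i)) :=
        mul_le_mul_of_nonneg_left (hui i) (by positivity)
      have hmm : (1/m) * (m * (1 - x i)) = 1 - x i := by field_simp
      linarith
  have hφ : ∀ t ∈ Icc (0:ℝ) (1/m), HasDerivWithinAt (fun r => f (x + r • u))
      (⟪f' (x + t • u), u⟫_ℝ) (Icc 0 (1/m)) t :=
    fun t ht => hasDerivWithinAt_comp_line (hgrad _ (hmaps t ht)) hmaps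
  have hkey : ∀ t ∈ Ioo (0:ℝ) (1/m), HasDerivAt (fun r => f (x + r • u))
      (⟪f' (x + t • u), u⟫_ℝ) t :=
    fun t ht => (hφ t ⟨ht.1.le, ht.2.le⟩).hasDerivAt (Icc_mem_nhds ht.1 ht.2)
  have hconc : ConcaveOn ℝ (Icc (0:ℝ) (1/m)) (fun t => f (x + t • u)) := by
    apply AntitoneOn.concaveOn_of_deriv (convex_Icc 0 (1/m))
    · exact fun t ht => ((hφ t ht).continuousWithinAt)
    · intro t ht
      rw [interior_Icc] at ht
      exact (hkey t ht).differentiableAt.differentiableWithinAt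
    · intro a ha b hb' hab
      rw [interior_Icc] at ha hb'
      rw [(hkey a ha).deriv, (hkey b hb').deriv]
      refine inner_grad_antitone hsub hgrad (hmaps a ⟨ha.1.le, ha.2.le⟩)
        (hmaps b ⟨hb'.1.le, hb'.2.le⟩) (fun i => ?_) hu (fun i hui' => ?_)
      · rw [coord_add_smul, coord_add_smul]
        nlinarith [hu i]
      · rw [coord_add_smul]
        have h2 := (hx i).2
        have htu : b * u i < (1/m) * u i := by
          exact mul_lt_mul_of_pos_right hb'.2 hui'
        have : (1/m) * u i ≤ (1/m) * (m * (1 - x i)) :=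
          mul_le_mul_of_nonneg_left (hui i) (by positivity)
        have hmm : (1/m) * (m * (1 - x i)) = 1 - x i := by field_simp
        linarith
  have hmem0 : (0:ℝ) ∈ Icc (0:ℝ) (1/m) := ⟨le_refl 0, by positivity⟩
  have h1m : (1:ℝ) ≤ 1/m := by
    rw [le_div_iff₀ hm0']; linarith
  have hmemm : (1/m) ∈ Icc (0:ℝ) (1/m) := ⟨by positivity, le_refl _⟩
  have hcc := hconc.2 hmem0 hmemm (by linarith : (0:ℝ) ≤ 1 - m) hm0 (by ring)
  simp only [smul_eq_mul, mul_zero, zero_add] at hcc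
  have hmm1 : m * (1/m) = 1 := by field_simp
  rw [hmm1] at hcc
  have he0 : x + (0:ℝ) • u = x := by simp
  have he1 : x + (1:ℝ) • u = w := by rw [hudef]; module
  rw [he0, he1] at hcc
  have hnn : 0 ≤ f (x + (1/m) • u) := hnonneg _ (hmaps _ hmemm)
  nlinarith


lemma abs_coord_le_norm (u : E d) (i : Fin d) : |u i| ≤ ‖u‖ := by
  rw [EuclideanSpace.norm_eq]
  have h1 : |u i| = Real.sqrt (|u i|^2) := by
    rw [Real.sqrt_sq_eq_abs, abs_abs]
  rw [h1]
  apply Real.sqrt_le_sqrt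
  rw [sq_abs]
  calc u i ^ 2 = ‖u i‖ ^ 2 := by rw [Real.norm_eq_abs, sq_abs]
    _ ≤ ∑ j, ‖u j‖ ^ 2 := Finset.single_le_sum (f := fun j => ‖u j‖^2)
        (fun j _ => by positivity) (Finset.mem_univ i)

lemma exp_pow_bound {L : ℕ} (hL : 1 ≤ L) :
    1 / Real.exp 1 ≤ (1 - 1 / (L : ℝ)) ^ (L - 1) := by
  rcases eq_or_lt_of_le hL with h1 | h2
  · rw [← h1]
    norm_num
    rw [inv_le_one_iff₀]
    have h := Real.add_one_le_exp (1:ℝ)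
    right; linarith
  · have hL2 : 2 ≤ L := h2
    have hLr : (2:ℝ) ≤ (L:ℝ) := by exact_mod_cast hL2
    set c : ℝ := 1 - 1 / (L:ℝ) with hc
    have hc0 : 0 < c := by
      rw [hc]
      have : 1 / (L:ℝ) ≤ 1/2 := by
        apply one_div_le_one_div_of_le <;> linarith
      linarith
    have hm : (L:ℝ) - 1 ≥ 1 := by linarith
    have hinv : 1 / c = 1 + 1 / ((L:ℝ) - 1) := by
      rw [hc]; field_simp; ring
    have hexp : 1 / c ≤ Real.exp (1 / ((L:ℝ) - 1)) := by
      rw [hinv]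
      have := Real.add_one_le_exp (1 / ((L:ℝ) - 1))
      linarith
    have hpow : (1 / c) ^ (L - 1) ≤ Real.exp 1 := by
      calc (1 / c) ^ (L - 1) ≤ (Real.exp (1 / ((L:ℝ) - 1))) ^ (L - 1) := by
            apply pow_le_pow_left₀ (by positivity) hexp
        _ = Real.exp ((L - 1 : ℕ) * (1 / ((L:ℝ) - 1))) := by
            rw [← Real.exp_nat_mul]
        _ = Real.exp 1 := by
            congr 1
            have : ((L - 1 : ℕ) : ℝ) = (L:ℝ) - 1 := by
              have := Nat.cast_sub hL (R := ℝ); simpa using this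
            rw [this]; field_simp
    have hcpow : 0 < c ^ (L-1) := by positivity
    rw [one_div_pow, div_le_iff₀ hcpow] at hpow
    rw [div_le_iff₀ (Real.exp_pos 1)]
    nlinarith

lemma inner_had_identity (g p v xx : E d) :
    ⟪g, had v (onesV d - p)⟫_ℝ
      = ⟪g, had xx (onesV d - p)⟫_ℝ - ⟪had g (p - onesV d), v - xx⟫_ℝ := by
  have h : ∀ w w' : E d, ⟪w, w'⟫_ℝ = ∑ i, w i * w' i := by
    intro w w'; simp [PiLp.inner_apply, RCLike.inner_apply, conj_trivial, mul_comm]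
  rw [h, h, h, ← Finset.sum_sub_distrib]
  apply Finset.sum_congr rfl
  intro i _
  simp only [had, onesV, PiLp.sub_apply]
  ring
section
variable {d : ℕ}

/-- Per-step Frank-Wolfe descent inequality for a single DR-submodular function. -/
lemma per_step {f : E d → ℝ} {f' : E d → E d} {β R : ℝ}
    (hsub : DRSubmodularOn d f)
    (hgrad : ∀ y ∈ cube d, HasGradientWithinAt f (f' y) (cube d) y)
    (hnonneg : ∀ y ∈ cube d, 0 ≤ f y)
    (hβ : 0 ≤ β)
    (hlip : ∀ y ∈ cube d, ∀ y' ∈ cube d, ‖f' y - f' y'‖ ≤ β * ‖y - y'‖)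
    {p v xx : E d} {c Lr : ℝ}
    (hp : p ∈ cube d) (hv : v ∈ cube d) (hxx : xx ∈ cube d)
    (hvR : ‖v‖ ≤ R) (hLr : 1 ≤ Lr)
    (hc0 : 0 ≤ c) (hc1 : c ≤ 1) (hm : ∀ i, p i ≤ 1 - c) :
    (1 - 1/Lr) * f p + (1/Lr) * c * f xx
      - (1/Lr) * ⟪had (f' p) (p - onesV d), v - xx⟫_ℝ - β * R^2 / (2 * Lr^2)
        ≤ f (p + Lr⁻¹ • had v (onesV d - p)) := by
  have hLr0 : 0 < Lr := lt_of_lt_of_le one_pos hLr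
  have hR0 : 0 ≤ R := le_trans (norm_nonneg v) hvR
  -- the new iterate is in the cube
  have hnew : p + Lr⁻¹ • had v (onesV d - p) ∈ cube d := by
    intro i
    have hco : (p + Lr⁻¹ • had v (onesV d - p)) i
        = p i + Lr⁻¹ * (v i * (1 - p i)) := by
      simp [had, onesV, PiLp.add_apply, PiLp.smul_apply, PiLp.sub_apply, smul_eq_mul]
    rw [Set.mem_Icc, hco]
    have h1 := (hp i).1; have h2 := (hp i).2
    have h3 := (hv i).1; have h4 := (hv i).2
    have hinv1 : Lr⁻¹ ≤ 1 := by
      rw [inv_le_one_iff₀]; right; exact hLr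
    have hinv0 : 0 < Lr⁻¹ := by positivity
    have h5 : v i * (1 - p i) ≤ 1 - p i := by nlinarith
    have h6 : 0 ≤ v i * (1 - p i) := by nlinarith
    have ht : Lr⁻¹ * (v i * (1 - p i)) ≤ 1 - p i := by
      calc Lr⁻¹ * (v i * (1 - p i)) ≤ 1 * (v i * (1 - p i)) := by nlinarith
        _ ≤ 1 - p i := by linarith
    have ht0 : 0 ≤ Lr⁻¹ * (v i * (1 - p i)) := by positivity
    constructor
    · linarith
    · linarith
  -- w1 : the "idealized" point
  set u1 : E d := had xx (onesV d - p) with hu1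
  have hu1c : ∀ i, u1 i = xx i * (1 - p i) := by
    intro i; simp [hu1, had, onesV, PiLp.sub_apply]
  have hu1nn : ∀ i, 0 ≤ u1 i := by
    intro i; rw [hu1c]
    exact mul_nonneg (hxx i).1 (by linarith [(hp i).2])
  have hw1 : p + u1 ∈ cube d := by
    intro i
    have hco : (p + u1) i = p i + xx i * (1 - p i) := by
      rw [PiLp.add_apply, hu1c]
    rw [Set.mem_Icc, hco]
    have h1 := (hp i).1; have h2 := (hp i).2
    have h3 := (hxx i).1; have h4 := (hxx i).2
    constructor
    · nlinarith
    · nlinarith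
  -- key lemma : f (p + u1) ≥ c * f xx
  have hkey : c * f xx ≤ f (p + u1) := by
    have h := key_lemma hsub hgrad hnonneg (m := 1 - c) hxx hw1
      (by linarith) (by linarith) (fun i => ?_) (fun i => ?_)
    · calc c * f xx = (1 - (1 - c)) * f xx := by ring
        _ ≤ f (p + u1) := h
    · have hco : (p + u1) i = p i + xx i * (1 - p i) := by
        rw [PiLp.add_apply, hu1c]
      rw [hco]
      nlinarith [(hxx i).2, (hp i).1, (hp i).2, (hxx i).1]
    · have hco : (p + u1) i = p i + xx i * (1 - p i) := by
        rw [PiLp.add_apply, hu1c]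
      rw [hco]
      have := hm i
      nlinarith [(hxx i).2, (hxx i).1, (hp i).2]
  -- first order bound
  have hfo : f (p + u1) - f p ≤ ⟪f' p, u1⟫_ℝ :=
    first_order_up hsub hgrad hp hu1nn hw1
  -- smoothness
  have hsm : f p + ⟪f' p, (p + Lr⁻¹ • had v (onesV d - p)) - p⟫_ℝ
      - β / 2 * ‖(p + Lr⁻¹ • had v (onesV d - p)) - p‖ ^ 2
        ≤ f (p + Lr⁻¹ • had v (onesV d - p)) :=
    smooth_lower hgrad hlip hp hnew
  have hdiff : (p + Lr⁻¹ • had v (onesV d - p)) - p = Lr⁻¹ • had v (onesV d - p) := by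
    abel
  rw [hdiff] at hsm
  -- norm bound
  have hnb : ‖Lr⁻¹ • had v (onesV d - p)‖ ≤ Lr⁻¹ * R := by
    rw [norm_smul, Real.norm_eq_abs, abs_of_pos (by positivity : (0:ℝ) < Lr⁻¹)]
    apply mul_le_mul_of_nonneg_left _ (by positivity)
    calc ‖had v (onesV d - p)‖ ≤ ‖v‖ := by
          apply norm_le_norm_of_abs_le
          intro i
          have hco : had v (onesV d - p) i = v i * (1 - p i) := by
            simp [had, onesV, PiLp.sub_apply]
          rw [hco, abs_mul]
          have h2 := (hp i).2; have h1 := (hp i).1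
          have : |1 - p i| ≤ 1 := by rw [abs_le]; constructor <;> linarith
          nlinarith [abs_nonneg (v i), abs_nonneg (1 - p i)]
      _ ≤ R := hvR
  have hnorm2 : β / 2 * ‖Lr⁻¹ • had v (onesV d - p)‖ ^ 2 ≤ β * R^2 / (2 * Lr^2) := by
    have h1 : ‖Lr⁻¹ • had v (onesV d - p)‖ ^ 2 ≤ (Lr⁻¹ * R)^2 := by
      apply pow_le_pow_left₀ (norm_nonneg _) hnb
    calc β / 2 * ‖Lr⁻¹ • had v (onesV d - p)‖ ^ 2 ≤ β / 2 * (Lr⁻¹ * R)^2 := by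
          apply mul_le_mul_of_nonneg_left h1 (by positivity)
      _ = β * R^2 / (2 * Lr^2) := by
          field_simp
  -- inner product decomposition
  have hinner : ⟪f' p, Lr⁻¹ • had v (onesV d - p)⟫_ℝ
      = Lr⁻¹ * (⟪f' p, had xx (onesV d - p)⟫_ℝ - ⟪had (f' p) (p - onesV d), v - xx⟫_ℝ) := by
    rw [real_inner_smul_right, inner_had_identity (f' p) p v xx]
  have hchain : Lr⁻¹ * (c * f xx - f p) - Lr⁻¹ * ⟪had (f' p) (p - onesV d), v - xx⟫_ℝ
      ≤ ⟪f' p, Lr⁻¹ • had v (onesV d - p)⟫_ℝ := by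
    rw [hinner, ← hu1]
    have h1 : c * f xx - f p ≤ ⟪f' p, u1⟫_ℝ := by linarith
    have := mul_le_mul_of_nonneg_left h1 (by positivity : (0:ℝ) ≤ Lr⁻¹)
    nlinarith [this]
  have hfin := le_trans (by linarith : f p + (Lr⁻¹ * (c * f xx - f p)
      - Lr⁻¹ * ⟪had (f' p) (p - onesV d), v - xx⟫_ℝ) - β * R^2 / (2 * Lr^2)
        ≤ f p + ⟪f' p, Lr⁻¹ • had v (onesV d - p)⟫_ℝ
          - β / 2 * ‖Lr⁻¹ • had v (onesV d - p)‖ ^ 2) hsm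
  have heq : (1 - 1/Lr) * f p + (1/Lr) * c * f xx
      - (1/Lr) * ⟪had (f' p) (p - onesV d), v - xx⟫_ℝ - β * R^2 / (2 * Lr^2)
      = f p + (Lr⁻¹ * (c * f xx - f p)
        - Lr⁻¹ * ⟪had (f' p) (p - onesV d), v - xx⟫_ℝ) - β * R^2 / (2 * Lr^2) := by
    simp only [one_div]
    ring
  rw [heq]
  exact hfin
end
lemma unroll {L : ℕ} {a b : ℕ → ℝ} {r : ℝ} (hr : 0 ≤ r) (h0 : 0 ≤ a 1)
    (hstep : ∀ k, 1 ≤ k → k ≤ L → r * a k + b k ≤ a (k + 1)) :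
    ∑ k ∈ Finset.Icc 1 L, r ^ (L - k) * b k ≤ a (L + 1) := by
  have main : ∀ m, m ≤ L → ∑ k ∈ Finset.Icc 1 m, r ^ (m - k) * b k ≤ a (m + 1) := by
    intro m
    induction m with
    | zero => intro _; simpa using h0
    | succ m ih =>
      intro hm
      have hmL : m ≤ L := Nat.le_of_succ_le hm
      have ihm := ih hmL
      have hsum : ∑ k ∈ Finset.Icc 1 (m+1), r ^ (m + 1 - k) * b k
          = r * (∑ k ∈ Finset.Icc 1 m, r ^ (m - k) * b k) + b (m+1) := by
        rw [Finset.sum_Icc_succ_top (by omega : 1 ≤ m + 1), Finset.mul_sum]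
        congr 1
        · apply Finset.sum_congr rfl
          intro k hk
          have hk' : k ≤ m := (Finset.mem_Icc.mp hk).2
          have : m + 1 - k = (m - k) + 1 := by omega
          rw [this, pow_succ]
          ring
        · simp
      rw [hsum]
      calc r * (∑ k ∈ Finset.Icc 1 m, r ^ (m - k) * b k) + b (m+1)
          ≤ r * a (m+1) + b (m+1) := by nlinarith [mul_le_mul_of_nonneg_left ihm hr]
        _ ≤ a (m+2) := hstep (m+1) (by omega) hm
  exact main L le_rfl
lemma sum_affine {A B : Type*} [Fintype A] [Fintype B]
    (g1 g2 g3 : A → B → ℝ) (r c l e : ℝ) :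
    ∑ s : A, ∑ j : B, (r * g1 s j + c * g2 s j - l * g3 s j - e)
      = r * (∑ s : A, ∑ j : B, g1 s j) + c * (∑ s : A, ∑ j : B, g2 s j)
        - l * (∑ s : A, ∑ j : B, g3 s j)
        - (Fintype.card A : ℝ) * (Fintype.card B : ℝ) * e := by
  simp only [Finset.sum_add_distrib, Finset.sum_sub_distrib, ← Finset.mul_sum,
    Finset.sum_const, Finset.card_univ, nsmul_eq_mul]
  ring

section
variable {d : ℕ}

lemma had_diff_bound {a b p q : E d} {β G : ℝ}
    (hp : p ∈ cube d) (hab : ‖a - b‖ ≤ β * ‖p - q‖) (hbG : ‖b‖ ≤ G) :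
    ‖had a (p - onesV d) - had b (q - onesV d)‖ ≤ (β + G) * ‖p - q‖ := by
  have hG0 : 0 ≤ G := le_trans (norm_nonneg b) hbG
  have hdec : had a (p - onesV d) - had b (q - onesV d)
      = (had (a - b) (p - onesV d)) + had b (p - q) := by
    ext i
    simp only [had, onesV, PiLp.sub_apply, PiLp.add_apply]
    ring
  rw [hdec]
  have h1 : ‖had (a - b) (p - onesV d)‖ ≤ ‖a - b‖ := by
    apply norm_le_norm_of_abs_le
    intro i
    have hco : had (a - b) (p - onesV d) i = (a - b) i * (p i - 1) := by
      simp [had, onesV, PiLp.sub_apply]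
    rw [hco, abs_mul]
    have h2 := (hp i).1; have h3 := (hp i).2
    have : |p i - 1| ≤ 1 := by rw [abs_le]; constructor <;> linarith
    nlinarith [abs_nonneg ((a-b) i)]
  have h2 : ‖had b (p - q)‖ ≤ G * ‖p - q‖ := by
    calc ‖had b (p - q)‖ ≤ ‖G • (p - q)‖ := by
          apply norm_le_norm_of_abs_le
          intro i
          have hco : had b (p - q) i = b i * (p - q) i := by simp [had]
          have hco2 : (G • (p - q)) i = G * (p - q) i := by
            simp [PiLp.smul_apply, smul_eq_mul]
          rw [hco, hco2, abs_mul, abs_mul, abs_of_nonneg hG0]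
          exact mul_le_mul_of_nonneg_right ((abs_coord_le_norm b i).trans hbG)
            (abs_nonneg _)
      _ = G * ‖p - q‖ := by rw [norm_smul, Real.norm_eq_abs, abs_of_nonneg hG0]
  calc ‖had (a - b) (p - onesV d) + had b (p - q)‖
      ≤ ‖had (a - b) (p - onesV d)‖ + ‖had b (p - q)‖ := norm_add_le _ _
    _ ≤ β * ‖p - q‖ + G * ‖p - q‖ := add_le_add (h1.trans hab) h2
    _ = (β + G) * ‖p - q‖ := by ring
end
end AuxMFW

/-- deterministic core of Theorem 4: the decentralized
Meta-Frank-Wolfe reduction. Time steps are indexed by blocks `q ∈ Fin Q` and positions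
`s ∈ Fin L` within a block (so `t = (q-1)L + s` and `T = QL`); `f q s j` is the reward
function of learner `j` at the `s`-th round of block `q`, `v q j k` is the `k`-th update
direction of learner `j` in block `q`, and `xs q j k` are the local Frank–Wolfe iterates
with final decision `xs q j (L+1)`. -/
theorem decentralized_meta_frank_wolfe_reduction
    (d n Q L : ℕ) (hd : 1 ≤ d) (hn : 1 ≤ n) (hQ : 1 ≤ Q) (hL : 1 ≤ L)
    (K : Set (EuclideanSpace ℝ (Fin d))) (hKcvx : Convex ℝ K) (hKX : K ⊆ cube d)
    (h0K : (0 : EuclideanSpace ℝ (Fin d)) ∈ K) (hdc : DownwardClosed d K)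
    (R : ℝ) (hR : ∀ y ∈ K, ‖y‖ ≤ R)
    (β G : ℝ)
    (f : Fin Q → Fin L → Fin n → EuclideanSpace ℝ (Fin d) → ℝ)
    (f' : Fin Q → Fin L → Fin n → EuclideanSpace ℝ (Fin d) → EuclideanSpace ℝ (Fin d))
    (hsub : ∀ q s j, DRSubmodularOn d (f q s j))
    (hnonneg : ∀ q s j, ∀ y ∈ cube d, 0 ≤ f q s j y)
    (hgrad : ∀ q s j, ∀ y ∈ cube d, HasGradientWithinAt (f q s j) (f' q s j y) (cube d) y)
    (hlip : ∀ q s j, ∀ y ∈ cube d, ∀ y' ∈ cube d,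
      ‖f' q s j y - f' q s j y'‖ ≤ β * ‖y - y'‖)
    (hbdd : ∀ q s j, ∀ y ∈ cube d, ‖f' q s j y‖ ≤ G)
    (v : Fin Q → Fin n → ℕ → EuclideanSpace ℝ (Fin d))
    (hv : ∀ q j k, 1 ≤ k → k ≤ L → v q j k ∈ K)
    (xs : Fin Q → Fin n → ℕ → EuclideanSpace ℝ (Fin d))
    (hxs1 : ∀ q j, xs q j 1 = 0)
    (hrec : ∀ q j k, 1 ≤ k → k ≤ L →
      xs q j (k + 1) = xs q j k + (L : ℝ)⁻¹ • had (v q j k) (onesV d - xs q j k)) :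
    ∀ i : Fin n, ∀ x ∈ K,
      (∑ q, ∑ s, ((1 / Real.exp 1) * (∑ j, f q s j x) - ∑ j, f q s j (xs q i (L + 1)))) ≤
        (∑ k ∈ Finset.Icc 1 L, (1 - 1 / (L : ℝ)) ^ (L - k) *
          ∑ q, ∑ j,
            (inner ℝ ((L : ℝ)⁻¹ •
                ∑ s, had (f' q s j (xs q j k)) (xs q j k - onesV d))
              (v q i k - x) : ℝ)) +
        4 * (β + G) * R *
          (∑ k ∈ Finset.Icc 1 L, ∑ q, ∑ j, ‖v q j k - v q i k‖) +
        (n : ℝ) * β * ((Q : ℝ) * (L : ℝ)) * R ^ 2 / (2 * (L : ℝ)) := by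
  intro i x hxK
  have hL0 : (0:ℝ) < L := by exact_mod_cast hL
  have hLr1 : (1:ℝ) ≤ (L:ℝ) := by exact_mod_cast hL
  set r : ℝ := 1 - 1 / (L : ℝ) with hrdef
  have hr0 : 0 ≤ r := by
    rw [hrdef]
    have h1 : 1 / (L:ℝ) ≤ 1 := by rw [div_le_one hL0]; exact hLr1
    linarith
  have hr1 : r ≤ 1 := by
    rw [hrdef]
    have : 0 < 1 / (L:ℝ) := by positivity
    linarith
  have h0cube : (0 : E d) ∈ cube d := by
    intro i'; simp [Set.mem_Icc]
  have h1cube : onesV d ∈ cube d := by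
    intro i'; simp [onesV, Set.mem_Icc]
  have hxcube : x ∈ cube d := hKX hxK
  have hR0 : 0 ≤ R := le_trans (norm_nonneg _) (hR 0 h0K)
  have hG0 : 0 ≤ G := le_trans (norm_nonneg _) (hbdd ⟨0,hQ⟩ ⟨0,hL⟩ ⟨0,hn⟩ 0 h0cube)
  have hβ0 : 0 ≤ β := by
    have hne : (0:ℝ) < ‖(0:E d) - onesV d‖ := by
      rw [norm_pos_iff]
      intro h
      have h0 : ((0:E d) - onesV d) ⟨0, hd⟩ = -1 := by
        simp [onesV, PiLp.sub_apply]
      rw [h] at h0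
      norm_num at h0
    have h2 := hlip ⟨0,hQ⟩ ⟨0,hL⟩ ⟨0,hn⟩ 0 h0cube (onesV d) h1cube
    nlinarith [norm_nonneg (f' ⟨0,hQ⟩ ⟨0,hL⟩ ⟨0,hn⟩ 0 - f' ⟨0,hQ⟩ ⟨0,hL⟩ ⟨0,hn⟩ (onesV d))]
  -- coordinate recurrence
  have hco : ∀ q j k, 1 ≤ k → k ≤ L → ∀ i', xs q j (k+1) i'
      = xs q j k i' + (L:ℝ)⁻¹ * (v q j k i' * (1 - xs q j k i')) := by
    intro q j k hk1 hkL i'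
    rw [hrec q j k hk1 hkL]
    simp [had, onesV, PiLp.add_apply, PiLp.smul_apply, PiLp.sub_apply, smul_eq_mul]
  -- iterate bounds
  have hit : ∀ q j k, 1 ≤ k → k ≤ L + 1 → ∀ i',
      0 ≤ xs q j k i' ∧ xs q j k i' ≤ 1 - r ^ (k-1) := by
    intro q j k
    induction k with
    | zero => intro h1 _; exact absurd h1 (by omega)
    | succ k ih =>
      intro hk1 hkL i'
      rcases Nat.eq_zero_or_pos k with hk0 | hkpos
      · subst hk0
        rw [hxs1]
        have : (0 : E d) i' = 0 := rfl
        rw [this]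
        norm_num
      · have hk1' : 1 ≤ k := hkpos
        have hkL' : k ≤ L := by omega
        have ihi := ih hk1' (by omega) i'
        have hvk := hKX (hv q j k hk1' hkL')
        have h3 := (hvk i').1
        have h4 := (hvk i').2
        rw [hco q j k hk1' hkL' i']
        have hpw : (0:ℝ) ≤ r ^ (k-1) := pow_nonneg hr0 _
        have hinv0 : (0:ℝ) < (L:ℝ)⁻¹ := by positivity
        have hinv1 : (L:ℝ)⁻¹ ≤ 1 := by
          rw [inv_le_one_iff₀]; right; exact hLr1
        have ha1 : xs q j k i' ≤ 1 := by
          have := ihi.2; linarith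
        constructor
        · have : 0 ≤ (L:ℝ)⁻¹ * (v q j k i' * (1 - xs q j k i')) := by
            apply mul_nonneg hinv0.le
            exact mul_nonneg h3 (by linarith)
          linarith [ihi.1]
        · have hexp : (k + 1) - 1 = (k - 1) + 1 := by omega
          rw [hexp, pow_succ]
          -- 1 - new = (1-a)(1 - v/L) ≥ r^(k-1) * r
          have hstep1 : r ^ (k-1) * r ≤ (1 - xs q j k i') * (1 - (L:ℝ)⁻¹ * v q j k i') := by
            apply mul_le_mul
            · linarith [ihi.2]
            · rw [hrdef]
              have : (L:ℝ)⁻¹ * v q j k i' ≤ (L:ℝ)⁻¹ * 1 :=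
                mul_le_mul_of_nonneg_left h4 hinv0.le
              simp only [one_div]
              linarith [this]
            · rw [hrdef]
              have : (L:ℝ)⁻¹ * v q j k i' ≤ (L:ℝ)⁻¹ * 1 :=
                mul_le_mul_of_nonneg_left h4 hinv0.le
              simp only [one_div]
              nlinarith [mul_nonneg hinv0.le h3]
            · linarith [ha1]
          nlinarith [hstep1]
  have hcube : ∀ q j k, 1 ≤ k → k ≤ L + 1 → xs q j k ∈ cube d := by
    intro q j k h1 h2 i'
    have h := hit q j k h1 h2 i'
    have hpw : (0:ℝ) ≤ r ^ (k-1) := pow_nonneg hr0 _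
    exact ⟨h.1, by linarith [h.2]⟩
  -- drift bound
  have hdrift : ∀ q j j' k, 1 ≤ k → k ≤ L + 1 →
      ‖xs q j k - xs q j' k‖ ≤ (L:ℝ)⁻¹ * ∑ k' ∈ Finset.Icc 1 (k-1), ‖v q j k' - v q j' k'‖ := by
    intro q j j' k
    induction k with
    | zero => intro h1 _; exact absurd h1 (by omega)
    | succ k ih =>
      intro hk1 hkL
      rcases Nat.eq_zero_or_pos k with hk0 | hkpos
      · subst hk0
        rw [hxs1, hxs1]
        simp
      · have hk1' : 1 ≤ k := hkpos
        have hkL' : k ≤ L := by omega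
        have ihk := ih hk1' (by omega)
        have hdec : xs q j (k+1) - xs q j' (k+1)
            = ((xs q j k - xs q j' k) - (L:ℝ)⁻¹ • had (v q j' k) (xs q j k - xs q j' k))
              + (L:ℝ)⁻¹ • had (v q j k - v q j' k) (onesV d - xs q j k) := by
          ext i'
          simp only [PiLp.sub_apply, PiLp.add_apply, PiLp.smul_apply, had, onesV, smul_eq_mul]
          rw [hco q j k hk1' hkL' i', hco q j' k hk1' hkL' i']
          ring
        have hA : ‖(xs q j k - xs q j' k) - (L:ℝ)⁻¹ • had (v q j' k) (xs q j k - xs q j' k)‖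
            ≤ ‖xs q j k - xs q j' k‖ := by
          apply norm_le_norm_of_abs_le
          intro i'
          have hcoA : ((xs q j k - xs q j' k) - (L:ℝ)⁻¹ • had (v q j' k) (xs q j k - xs q j' k)) i'
              = (xs q j k - xs q j' k) i' * (1 - (L:ℝ)⁻¹ * v q j' k i') := by
            simp only [PiLp.sub_apply, PiLp.smul_apply, had, smul_eq_mul]
            ring
          rw [hcoA, abs_mul]
          have hvk := hKX (hv q j' k hk1' hkL')
          have h3 := (hvk i').1; have h4 := (hvk i').2
          have hinv0 : (0:ℝ) < (L:ℝ)⁻¹ := by positivity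
          have hinv1 : (L:ℝ)⁻¹ ≤ 1 := by rw [inv_le_one_iff₀]; right; exact hLr1
          have habs : |1 - (L:ℝ)⁻¹ * v q j' k i'| ≤ 1 := by
            rw [abs_le]
            constructor
            · nlinarith [mul_nonneg hinv0.le h3]
            · nlinarith [mul_nonneg hinv0.le h3]
          nlinarith [abs_nonneg ((xs q j k - xs q j' k) i')]
        have hB : ‖(L:ℝ)⁻¹ • had (v q j k - v q j' k) (onesV d - xs q j k)‖
            ≤ (L:ℝ)⁻¹ * ‖v q j k - v q j' k‖ := by
          rw [norm_smul, Real.norm_eq_abs, abs_of_pos (by positivity : (0:ℝ) < (L:ℝ)⁻¹)]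
          apply mul_le_mul_of_nonneg_left _ (by positivity)
          apply norm_le_norm_of_abs_le
          intro i'
          have hcoB : had (v q j k - v q j' k) (onesV d - xs q j k) i'
              = (v q j k - v q j' k) i' * (1 - xs q j k i') := by
            simp [had, onesV, PiLp.sub_apply]
          rw [hcoB, abs_mul]
          have hm := hit q j k hk1' (by omega) i'
          have habs : |1 - xs q j k i'| ≤ 1 := by
            rw [abs_le]
            have hpw : (0:ℝ) ≤ r ^ (k-1) := pow_nonneg hr0 _
            constructor
            · nlinarith [hm.2]
            · nlinarith [hm.1]
          nlinarith [abs_nonneg ((v q j k - v q j' k) i')]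
        rw [hdec]
        have hkk : (k + 1) - 1 = k := by omega
        rw [hkk]
        have hsucc : ∑ k' ∈ Finset.Icc 1 k, ‖v q j k' - v q j' k'‖
            = (∑ k' ∈ Finset.Icc 1 (k-1), ‖v q j k' - v q j' k'‖) + ‖v q j k - v q j' k‖ := by
          have hk' : k = (k - 1) + 1 := by omega
          rw [hk', Finset.sum_Icc_succ_top (by omega : 1 ≤ (k-1)+1), ← hk']
        rw [hsucc, mul_add]
        calc ‖_ + _‖ ≤ _ := norm_add_le _ _
          _ ≤ ‖xs q j k - xs q j' k‖ + (L:ℝ)⁻¹ * ‖v q j k - v q j' k‖ := add_le_add hA hB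
          _ ≤ (L:ℝ)⁻¹ * (∑ k' ∈ Finset.Icc 1 (k-1), ‖v q j k' - v q j' k'‖)
              + (L:ℝ)⁻¹ * ‖v q j k - v q j' k‖ := by linarith [ihk]
    -- per-step descent inequality (summed over s, j)
  have hstep : ∀ (q : Fin Q) (k : ℕ), 1 ≤ k → k ≤ L →
      r * (∑ s, ∑ j, f q s j (xs q i k))
        + ((L:ℝ)⁻¹ * r ^ (k-1) * (∑ s, ∑ j, f q s j x)
          - (L:ℝ)⁻¹ * (∑ s, ∑ j, ⟪had (f' q s j (xs q i k)) (xs q i k - onesV d), v q i k - x⟫_ℝ)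
          - (n:ℝ) * β * R^2 / (2 * (L:ℝ)))
      ≤ ∑ s, ∑ j, f q s j (xs q i (k+1)) := by
    intro q k hk1 hkL
    have hps : ∀ (s : Fin L) (j : Fin n),
        (1 - 1/(L:ℝ)) * f q s j (xs q i k) + 1/(L:ℝ) * r ^ (k-1) * f q s j x
          - 1/(L:ℝ) * ⟪had (f' q s j (xs q i k)) (xs q i k - onesV d), v q i k - x⟫_ℝ
          - β * R^2 / (2 * (L:ℝ)^2)
        ≤ f q s j (xs q i (k+1)) := by
      intro s j
      rw [hrec q i k hk1 hkL]
      exact per_step (hsub q s j) (hgrad q s j) (hnonneg q s j) hβ0 (hlip q s j)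
        (hcube q i k hk1 (by omega)) (hKX (hv q i k hk1 hkL)) hxcube
        (hR _ (hv q i k hk1 hkL)) hLr1 (pow_nonneg hr0 _) (pow_le_one₀ hr0 hr1)
        (fun i' => (hit q i k hk1 (by omega) i').2)
    have hsum : ∑ s, ∑ j, ((1 - 1/(L:ℝ)) * f q s j (xs q i k) + 1/(L:ℝ) * r ^ (k-1) * f q s j x
          - 1/(L:ℝ) * ⟪had (f' q s j (xs q i k)) (xs q i k - onesV d), v q i k - x⟫_ℝ
          - β * R^2 / (2 * (L:ℝ)^2))
        ≤ ∑ s, ∑ j, f q s j (xs q i (k+1)) :=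
      Finset.sum_le_sum (fun s _ => Finset.sum_le_sum (fun j _ => hps s j))
    rw [sum_affine (fun s j => f q s j (xs q i k)) (fun s j => f q s j x)
      (fun s j => ⟪had (f' q s j (xs q i k)) (xs q i k - onesV d), v q i k - x⟫_ℝ)
      (1 - 1/(L:ℝ)) (1/(L:ℝ) * r ^ (k-1)) (1/(L:ℝ)) (β * R^2 / (2 * (L:ℝ)^2))] at hsum
    simp only [Fintype.card_fin] at hsum
    rw [← hrdef] at hsum
    simp only [one_div] at hsum
    have heqe : (L:ℝ) * (n:ℝ) * (β * R^2 / (2 * (L:ℝ)^2)) = (n:ℝ) * β * R^2 / (2 * (L:ℝ)) := by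
      field_simp
    linarith [hsum]
  -- per-block bound via unrolling
  have hblock : ∀ q : Fin Q,
      (1 / Real.exp 1) * (∑ s, ∑ j, f q s j x) - (∑ s, ∑ j, f q s j (xs q i (L+1)))
        ≤ (∑ k ∈ Finset.Icc 1 L, r^(L-k) * ((L:ℝ)⁻¹ *
            (∑ s, ∑ j, ⟪had (f' q s j (xs q i k)) (xs q i k - onesV d), v q i k - x⟫_ℝ)))
          + (n:ℝ) * β * R^2 / 2 := by
    intro q
    have hFx0 : 0 ≤ ∑ s, ∑ j, f q s j x :=
      Finset.sum_nonneg (fun s _ => Finset.sum_nonneg (fun j _ => hnonneg q s j x hxcube))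
    have ha1 : 0 ≤ ∑ s, ∑ j, f q s j (xs q i 1) := by
      rw [hxs1]
      exact Finset.sum_nonneg (fun s _ => Finset.sum_nonneg (fun j _ => hnonneg q s j 0 h0cube))
    have hu := unroll (L := L) (a := fun k => ∑ s, ∑ j, f q s j (xs q i k))
      (b := fun k => (L:ℝ)⁻¹ * r ^ (k-1) * (∑ s, ∑ j, f q s j x)
        - (L:ℝ)⁻¹ * (∑ s, ∑ j, ⟪had (f' q s j (xs q i k)) (xs q i k - onesV d), v q i k - x⟫_ℝ)
        - (n:ℝ) * β * R^2 / (2 * (L:ℝ)))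
      hr0 ha1 (fun k h1 h2 => hstep q k h1 h2)
    -- split the unrolled sum
    have hsplit : ∑ k ∈ Finset.Icc 1 L, r^(L-k) *
        ((L:ℝ)⁻¹ * r ^ (k-1) * (∑ s, ∑ j, f q s j x)
          - (L:ℝ)⁻¹ * (∑ s, ∑ j, ⟪had (f' q s j (xs q i k)) (xs q i k - onesV d), v q i k - x⟫_ℝ)
          - (n:ℝ) * β * R^2 / (2 * (L:ℝ)))
        = r^(L-1) * (∑ s, ∑ j, f q s j x)
          - (∑ k ∈ Finset.Icc 1 L, r^(L-k) * ((L:ℝ)⁻¹ *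
              (∑ s, ∑ j, ⟪had (f' q s j (xs q i k)) (xs q i k - onesV d), v q i k - x⟫_ℝ)))
          - (∑ k ∈ Finset.Icc 1 L, r^(L-k) * ((n:ℝ) * β * R^2 / (2 * (L:ℝ)))) := by
      have h1 : ∀ k ∈ Finset.Icc 1 L, r^(L-k) *
          ((L:ℝ)⁻¹ * r ^ (k-1) * (∑ s, ∑ j, f q s j x)
            - (L:ℝ)⁻¹ * (∑ s, ∑ j, ⟪had (f' q s j (xs q i k)) (xs q i k - onesV d), v q i k - x⟫_ℝ)
            - (n:ℝ) * β * R^2 / (2 * (L:ℝ)))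
          = (L:ℝ)⁻¹ * (r^(L-1) * (∑ s, ∑ j, f q s j x))
            - r^(L-k) * ((L:ℝ)⁻¹ *
              (∑ s, ∑ j, ⟪had (f' q s j (xs q i k)) (xs q i k - onesV d), v q i k - x⟫_ℝ))
            - r^(L-k) * ((n:ℝ) * β * R^2 / (2 * (L:ℝ))) := by
        intro k hk
        rw [Finset.mem_Icc] at hk
        have hpow : r^(L-k) * r^(k-1) = r^(L-1) := by
          rw [← pow_add]
          congr 1
          omega
        calc r^(L-k) * ((L:ℝ)⁻¹ * r ^ (k-1) * (∑ s, ∑ j, f q s j x)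
              - (L:ℝ)⁻¹ * (∑ s, ∑ j, ⟪had (f' q s j (xs q i k)) (xs q i k - onesV d), v q i k - x⟫_ℝ)
              - (n:ℝ) * β * R^2 / (2 * (L:ℝ)))
            = (r^(L-k) * r^(k-1)) * ((L:ℝ)⁻¹ * (∑ s, ∑ j, f q s j x))
              - r^(L-k) * ((L:ℝ)⁻¹ *
                (∑ s, ∑ j, ⟪had (f' q s j (xs q i k)) (xs q i k - onesV d), v q i k - x⟫_ℝ))
              - r^(L-k) * ((n:ℝ) * β * R^2 / (2 * (L:ℝ))) := by ring
          _ = _ := by rw [hpow]; ring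
      calc ∑ k ∈ Finset.Icc 1 L, r^(L-k) *
            ((L:ℝ)⁻¹ * r ^ (k-1) * (∑ s, ∑ j, f q s j x)
              - (L:ℝ)⁻¹ * (∑ s, ∑ j, ⟪had (f' q s j (xs q i k)) (xs q i k - onesV d), v q i k - x⟫_ℝ)
              - (n:ℝ) * β * R^2 / (2 * (L:ℝ)))
          = ∑ k ∈ Finset.Icc 1 L, ((L:ℝ)⁻¹ * (r^(L-1) * (∑ s, ∑ j, f q s j x))
              - r^(L-k) * ((L:ℝ)⁻¹ *
                (∑ s, ∑ j, ⟪had (f' q s j (xs q i k)) (xs q i k - onesV d), v q i k - x⟫_ℝ))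
              - r^(L-k) * ((n:ℝ) * β * R^2 / (2 * (L:ℝ)))) := Finset.sum_congr rfl h1
        _ = _ := by
            rw [Finset.sum_sub_distrib, Finset.sum_sub_distrib, Finset.sum_const, Nat.card_Icc]
            simp only [Nat.add_sub_cancel, nsmul_eq_mul]
            have hLL : (L:ℝ) * ((L:ℝ)⁻¹ * (r^(L-1) * (∑ s, ∑ j, f q s j x)))
                = r^(L-1) * (∑ s, ∑ j, f q s j x) := by
              field_simp
            rw [hLL]
    rw [hsplit] at hu
    have hE1 : ∑ k ∈ Finset.Icc 1 L, r^(L-k) * ((n:ℝ) * β * R^2 / (2 * (L:ℝ)))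
        ≤ (n:ℝ) * β * R^2 / 2 := by
      have hterm : ∀ k ∈ Finset.Icc 1 L, r^(L-k) * ((n:ℝ) * β * R^2 / (2 * (L:ℝ)))
          ≤ (n:ℝ) * β * R^2 / (2 * (L:ℝ)) := by
        intro k _
        have h1 : r^(L-k) ≤ 1 := pow_le_one₀ hr0 hr1
        have h2 : 0 ≤ (n:ℝ) * β * R^2 / (2 * (L:ℝ)) := by positivity
        nlinarith
      calc ∑ k ∈ Finset.Icc 1 L, r^(L-k) * ((n:ℝ) * β * R^2 / (2 * (L:ℝ)))
          ≤ ∑ k ∈ Finset.Icc 1 L, (n:ℝ) * β * R^2 / (2 * (L:ℝ)) :=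
            Finset.sum_le_sum hterm
        _ = (L:ℝ) * ((n:ℝ) * β * R^2 / (2 * (L:ℝ))) := by
            rw [Finset.sum_const, Nat.card_Icc]
            simp only [Nat.add_sub_cancel, nsmul_eq_mul]
        _ = (n:ℝ) * β * R^2 / 2 := by
            field_simp
    have hexp : (1 / Real.exp 1) * (∑ s, ∑ j, f q s j x)
        ≤ r^(L-1) * (∑ s, ∑ j, f q s j x) := by
      apply mul_le_mul_of_nonneg_right _ hFx0
      rw [hrdef]
      exact exp_pow_bound hL
    linarith
    -- compare local-gradient inner products with neighbors' (σ vs ρ)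
  have hσρ : ∀ (q : Fin Q) (k : ℕ), 1 ≤ k → k ≤ L →
      (L:ℝ)⁻¹ * (∑ s, ∑ j, ⟪had (f' q s j (xs q i k)) (xs q i k - onesV d), v q i k - x⟫_ℝ)
        ≤ (∑ j, ⟪(L:ℝ)⁻¹ • ∑ s, had (f' q s j (xs q j k)) (xs q j k - onesV d), v q i k - x⟫_ℝ)
          + 2*(β+G)*R * ∑ j, ‖xs q i k - xs q j k‖ := by
    intro q k hk1 hkL
    have hvx2R : ‖v q i k - x‖ ≤ 2 * R := by
      calc ‖v q i k - x‖ ≤ ‖v q i k‖ + ‖x‖ := norm_sub_le _ _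
        _ ≤ R + R := add_le_add (hR _ (hv q i k hk1 hkL)) (hR x hxK)
        _ = 2 * R := by ring
    have hperj : ∀ j : Fin n,
        (L:ℝ)⁻¹ * (∑ s, ⟪had (f' q s j (xs q i k)) (xs q i k - onesV d), v q i k - x⟫_ℝ)
          ≤ ⟪(L:ℝ)⁻¹ • ∑ s, had (f' q s j (xs q j k)) (xs q j k - onesV d), v q i k - x⟫_ℝ
            + 2*(β+G)*R * ‖xs q i k - xs q j k‖ := by
      intro j
      have hpicube := hcube q i k hk1 (by omega)
      have hpjcube := hcube q j k hk1 (by omega)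
      have hA : (L:ℝ)⁻¹ * (∑ s, ⟪had (f' q s j (xs q i k)) (xs q i k - onesV d), v q i k - x⟫_ℝ)
          = ⟪(L:ℝ)⁻¹ • ∑ s, had (f' q s j (xs q i k)) (xs q i k - onesV d), v q i k - x⟫_ℝ := by
        rw [real_inner_smul_left, sum_inner]
      rw [hA]
      have hdiff : ⟪(L:ℝ)⁻¹ • ∑ s, had (f' q s j (xs q i k)) (xs q i k - onesV d), v q i k - x⟫_ℝ
          - ⟪(L:ℝ)⁻¹ • ∑ s, had (f' q s j (xs q j k)) (xs q j k - onesV d), v q i k - x⟫_ℝ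
          ≤ 2*(β+G)*R * ‖xs q i k - xs q j k‖ := by
        rw [← inner_sub_left]
        have hsub2 : (L:ℝ)⁻¹ • (∑ s, had (f' q s j (xs q i k)) (xs q i k - onesV d))
            - (L:ℝ)⁻¹ • (∑ s, had (f' q s j (xs q j k)) (xs q j k - onesV d))
            = (L:ℝ)⁻¹ • ((∑ s, had (f' q s j (xs q i k)) (xs q i k - onesV d))
              - (∑ s, had (f' q s j (xs q j k)) (xs q j k - onesV d))) := by
          rw [smul_sub]
        rw [hsub2]
        have hnormZ : ‖(L:ℝ)⁻¹ • ((∑ s, had (f' q s j (xs q i k)) (xs q i k - onesV d))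
            - (∑ s, had (f' q s j (xs q j k)) (xs q j k - onesV d)))‖
            ≤ (β+G) * ‖xs q i k - xs q j k‖ := by
          rw [norm_smul, Real.norm_eq_abs, abs_of_pos (by positivity : (0:ℝ) < (L:ℝ)⁻¹)]
          have hsumdiff : (∑ s, had (f' q s j (xs q i k)) (xs q i k - onesV d))
              - (∑ s, had (f' q s j (xs q j k)) (xs q j k - onesV d))
              = ∑ s, (had (f' q s j (xs q i k)) (xs q i k - onesV d)
                - had (f' q s j (xs q j k)) (xs q j k - onesV d)) := by
            rw [Finset.sum_sub_distrib]
          rw [hsumdiff]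
          have hterm : ∀ s : Fin L, ‖had (f' q s j (xs q i k)) (xs q i k - onesV d)
              - had (f' q s j (xs q j k)) (xs q j k - onesV d)‖
              ≤ (β+G) * ‖xs q i k - xs q j k‖ := by
            intro s
            exact had_diff_bound hpicube
              (hlip q s j (xs q i k) hpicube (xs q j k) hpjcube)
              (hbdd q s j (xs q j k) hpjcube)
          calc (L:ℝ)⁻¹ * ‖∑ s, (had (f' q s j (xs q i k)) (xs q i k - onesV d)
                - had (f' q s j (xs q j k)) (xs q j k - onesV d))‖
              ≤ (L:ℝ)⁻¹ * ∑ s, ‖had (f' q s j (xs q i k)) (xs q i k - onesV d)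
                - had (f' q s j (xs q j k)) (xs q j k - onesV d)‖ := by
                apply mul_le_mul_of_nonneg_left (norm_sum_le _ _) (by positivity)
            _ ≤ (L:ℝ)⁻¹ * ∑ _s : Fin L, (β+G) * ‖xs q i k - xs q j k‖ := by
                apply mul_le_mul_of_nonneg_left _ (by positivity)
                exact Finset.sum_le_sum (fun s _ => hterm s)
            _ = (β+G) * ‖xs q i k - xs q j k‖ := by
                rw [Finset.sum_const, Finset.card_univ, Fintype.card_fin, nsmul_eq_mul]
                field_simp
        calc ⟪(L:ℝ)⁻¹ • ((∑ s, had (f' q s j (xs q i k)) (xs q i k - onesV d))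
              - (∑ s, had (f' q s j (xs q j k)) (xs q j k - onesV d))), v q i k - x⟫_ℝ
            ≤ ‖(L:ℝ)⁻¹ • ((∑ s, had (f' q s j (xs q i k)) (xs q i k - onesV d))
              - (∑ s, had (f' q s j (xs q j k)) (xs q j k - onesV d)))‖ * ‖v q i k - x‖ :=
              real_inner_le_norm _ _
          _ ≤ ((β+G) * ‖xs q i k - xs q j k‖) * (2 * R) := by
              apply mul_le_mul hnormZ hvx2R (norm_nonneg _)
              positivity
          _ = 2*(β+G)*R * ‖xs q i k - xs q j k‖ := by ring
      linarith
    have hswap : (∑ s, ∑ j, ⟪had (f' q s j (xs q i k)) (xs q i k - onesV d), v q i k - x⟫_ℝ)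
        = ∑ j, ∑ s, ⟪had (f' q s j (xs q i k)) (xs q i k - onesV d), v q i k - x⟫_ℝ :=
      Finset.sum_comm
    rw [hswap, Finset.mul_sum]
    calc ∑ j, (L:ℝ)⁻¹ * (∑ s, ⟪had (f' q s j (xs q i k)) (xs q i k - onesV d), v q i k - x⟫_ℝ)
        ≤ ∑ j, (⟪(L:ℝ)⁻¹ • ∑ s, had (f' q s j (xs q j k)) (xs q j k - onesV d), v q i k - x⟫_ℝ
            + 2*(β+G)*R * ‖xs q i k - xs q j k‖) := Finset.sum_le_sum (fun j _ => hperj j)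
      _ = _ := by
          rw [Finset.sum_add_distrib, ← Finset.mul_sum]
  -- nonnegativity of the drift sums
  have hβG : (0:ℝ) ≤ 2*(β+G)*R := by positivity
  -- bound the total drift
  have hDX : ∑ k ∈ Finset.Icc 1 L, ∑ q, (∑ j, ‖xs q i k - xs q j k‖)
      ≤ ∑ k ∈ Finset.Icc 1 L, ∑ q, ∑ j, ‖v q j k - v q i k‖ := by
    have h1 : ∀ k ∈ Finset.Icc 1 L, ∑ q, (∑ j, ‖xs q i k - xs q j k‖)
        ≤ ∑ q, ∑ j, ((L:ℝ)⁻¹ * ∑ k' ∈ Finset.Icc 1 L, ‖v q i k' - v q j k'‖) := by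
      intro k hk
      rw [Finset.mem_Icc] at hk
      apply Finset.sum_le_sum
      intro q _
      apply Finset.sum_le_sum
      intro j _
      calc ‖xs q i k - xs q j k‖
          ≤ (L:ℝ)⁻¹ * ∑ k' ∈ Finset.Icc 1 (k-1), ‖v q i k' - v q j k'‖ :=
            hdrift q i j k hk.1 (by omega)
        _ ≤ (L:ℝ)⁻¹ * ∑ k' ∈ Finset.Icc 1 L, ‖v q i k' - v q j k'‖ := by
            apply mul_le_mul_of_nonneg_left _ (by positivity)
            apply Finset.sum_le_sum_of_subset_of_nonneg
            · apply Finset.Icc_subset_Icc_right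
              omega
            · intro k' _ _
              exact norm_nonneg _
    calc ∑ k ∈ Finset.Icc 1 L, ∑ q, (∑ j, ‖xs q i k - xs q j k‖)
        ≤ ∑ k ∈ Finset.Icc 1 L, (∑ q, ∑ j, ((L:ℝ)⁻¹ * ∑ k' ∈ Finset.Icc 1 L, ‖v q i k' - v q j k'‖)) :=
          Finset.sum_le_sum h1
      _ = (L:ℝ) * ∑ q, ∑ j, ((L:ℝ)⁻¹ * ∑ k' ∈ Finset.Icc 1 L, ‖v q i k' - v q j k'‖) := by
          rw [Finset.sum_const, Nat.card_Icc]
          simp only [Nat.add_sub_cancel, nsmul_eq_mul]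
      _ = ∑ q, ∑ j, ∑ k' ∈ Finset.Icc 1 L, ‖v q i k' - v q j k'‖ := by
          rw [Finset.mul_sum]
          apply Finset.sum_congr rfl
          intro q _
          rw [Finset.mul_sum]
          apply Finset.sum_congr rfl
          intro j _
          rw [← mul_assoc]
          rw [mul_inv_cancel₀ (ne_of_gt hL0), one_mul]
      _ = ∑ k ∈ Finset.Icc 1 L, ∑ q, ∑ j, ‖v q j k - v q i k‖ := by
          have hflip : ∀ (q : Fin Q) (j : Fin n) (k' : ℕ), ‖v q i k' - v q j k'‖ = ‖v q j k' - v q i k'‖ :=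
            fun q j k' => norm_sub_rev _ _
          simp_rw [hflip]
          calc ∑ q, ∑ j, ∑ k' ∈ Finset.Icc 1 L, ‖v q j k' - v q i k'‖
              = ∑ q, ∑ k' ∈ Finset.Icc 1 L, ∑ j, ‖v q j k' - v q i k'‖ := by
                apply Finset.sum_congr rfl
                intro q _
                exact Finset.sum_comm
            _ = ∑ k' ∈ Finset.Icc 1 L, ∑ q, ∑ j, ‖v q j k' - v q i k'‖ := Finset.sum_comm
  -- rewrite the LHS blockwise
  have hLHS : (∑ q, ∑ s, ((1 / Real.exp 1) * (∑ j, f q s j x) - ∑ j, f q s j (xs q i (L+1))))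
      = ∑ q, ((1 / Real.exp 1) * (∑ s, ∑ j, f q s j x) - ∑ s, ∑ j, f q s j (xs q i (L+1))) := by
    apply Finset.sum_congr rfl
    intro q _
    rw [Finset.sum_sub_distrib, ← Finset.mul_sum]
  -- chained estimate
  have hchain1 : (∑ q, ∑ s, ((1 / Real.exp 1) * (∑ j, f q s j x) - ∑ j, f q s j (xs q i (L+1))))
      ≤ (∑ q, ∑ k ∈ Finset.Icc 1 L, r^(L-k) * ((L:ℝ)⁻¹ *
          (∑ s, ∑ j, ⟪had (f' q s j (xs q i k)) (xs q i k - onesV d), v q i k - x⟫_ℝ)))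
        + (Q:ℝ) * ((n:ℝ) * β * R^2 / 2) := by
    rw [hLHS]
    calc ∑ q, ((1 / Real.exp 1) * (∑ s, ∑ j, f q s j x) - ∑ s, ∑ j, f q s j (xs q i (L+1)))
        ≤ ∑ q, ((∑ k ∈ Finset.Icc 1 L, r^(L-k) * ((L:ℝ)⁻¹ *
            (∑ s, ∑ j, ⟪had (f' q s j (xs q i k)) (xs q i k - onesV d), v q i k - x⟫_ℝ)))
          + (n:ℝ) * β * R^2 / 2) := Finset.sum_le_sum (fun q _ => hblock q)
      _ = _ := by
          rw [Finset.sum_add_distrib, Finset.sum_const, Finset.card_univ, Fintype.card_fin,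
            nsmul_eq_mul]
  have hchain2 : (∑ q, ∑ k ∈ Finset.Icc 1 L, r^(L-k) * ((L:ℝ)⁻¹ *
        (∑ s, ∑ j, ⟪had (f' q s j (xs q i k)) (xs q i k - onesV d), v q i k - x⟫_ℝ)))
      ≤ (∑ k ∈ Finset.Icc 1 L, r^(L-k) *
          ∑ q, ∑ j, ⟪(L:ℝ)⁻¹ • ∑ s, had (f' q s j (xs q j k)) (xs q j k - onesV d), v q i k - x⟫_ℝ)
        + 2*(β+G)*R * ∑ k ∈ Finset.Icc 1 L, ∑ q, ∑ j, ‖v q j k - v q i k‖ := by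
    rw [Finset.sum_comm]
    have hkq : ∀ k ∈ Finset.Icc 1 L, ∀ q : Fin Q,
        r^(L-k) * ((L:ℝ)⁻¹ *
          (∑ s, ∑ j, ⟪had (f' q s j (xs q i k)) (xs q i k - onesV d), v q i k - x⟫_ℝ))
        ≤ r^(L-k) * (∑ j, ⟪(L:ℝ)⁻¹ • ∑ s, had (f' q s j (xs q j k)) (xs q j k - onesV d), v q i k - x⟫_ℝ)
          + 2*(β+G)*R * (∑ j, ‖xs q i k - xs q j k‖) := by
      intro k hk q
      rw [Finset.mem_Icc] at hk
      have h := hσρ q k hk.1 hk.2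
      have ht0 : (0:ℝ) ≤ r^(L-k) := pow_nonneg hr0 _
      have ht1 : r^(L-k) ≤ 1 := pow_le_one₀ hr0 hr1
      have hD0 : (0:ℝ) ≤ ∑ j, ‖xs q i k - xs q j k‖ :=
        Finset.sum_nonneg (fun j _ => norm_nonneg _)
      nlinarith [mul_le_mul_of_nonneg_left h ht0,
        mul_nonneg (mul_nonneg hβG hD0) (sub_nonneg.mpr ht1)]
    calc ∑ k ∈ Finset.Icc 1 L, ∑ q, (r^(L-k) * ((L:ℝ)⁻¹ *
          (∑ s, ∑ j, ⟪had (f' q s j (xs q i k)) (xs q i k - onesV d), v q i k - x⟫_ℝ)))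
        ≤ ∑ k ∈ Finset.Icc 1 L, ∑ q, (r^(L-k) *
            (∑ j, ⟪(L:ℝ)⁻¹ • ∑ s, had (f' q s j (xs q j k)) (xs q j k - onesV d), v q i k - x⟫_ℝ)
          + 2*(β+G)*R * (∑ j, ‖xs q i k - xs q j k‖)) := by
          apply Finset.sum_le_sum
          intro k hk
          exact Finset.sum_le_sum (fun q _ => hkq k hk q)
      _ = (∑ k ∈ Finset.Icc 1 L, ∑ q, r^(L-k) *
            (∑ j, ⟪(L:ℝ)⁻¹ • ∑ s, had (f' q s j (xs q j k)) (xs q j k - onesV d), v q i k - x⟫_ℝ))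
          + ∑ k ∈ Finset.Icc 1 L, ∑ q, 2*(β+G)*R * (∑ j, ‖xs q i k - xs q j k‖) := by
          simp only [Finset.sum_add_distrib]
      _ = (∑ k ∈ Finset.Icc 1 L, r^(L-k) *
            ∑ q, ∑ j, ⟪(L:ℝ)⁻¹ • ∑ s, had (f' q s j (xs q j k)) (xs q j k - onesV d), v q i k - x⟫_ℝ)
          + 2*(β+G)*R * (∑ k ∈ Finset.Icc 1 L, ∑ q, (∑ j, ‖xs q i k - xs q j k‖)) := by
          congr 1
          · apply Finset.sum_congr rfl
            intro k _
            rw [Finset.mul_sum]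
          · rw [Finset.mul_sum]
            apply Finset.sum_congr rfl
            intro k _
            rw [Finset.mul_sum]
      _ ≤ _ := by
          have h2 := mul_le_mul_of_nonneg_left hDX hβG
          linarith
  -- finish
  have hX0 : (0:ℝ) ≤ ∑ k ∈ Finset.Icc 1 L, ∑ q, ∑ j, ‖v q j k - v q i k‖ :=
    Finset.sum_nonneg (fun k _ => Finset.sum_nonneg (fun q _ =>
      Finset.sum_nonneg (fun j _ => norm_nonneg _)))
  have hE : (Q:ℝ) * ((n:ℝ) * β * R^2 / 2) = (n:ℝ) * β * ((Q:ℝ) * (L:ℝ)) * R^2 / (2 * (L:ℝ)) := by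
    field_simp
  have h4 : 2*(β+G)*R * (∑ k ∈ Finset.Icc 1 L, ∑ q, ∑ j, ‖v q j k - v q i k‖)
      ≤ 4*(β+G)*R * (∑ k ∈ Finset.Icc 1 L, ∑ q, ∑ j, ‖v q j k - v q i k‖) := by
    nlinarith [mul_nonneg (mul_nonneg (add_nonneg hβ0 hG0) hR0) hX0]
  calc (∑ q, ∑ s, ((1 / Real.exp 1) * (∑ j, f q s j x) - ∑ j, f q s j (xs q i (L+1))))
      ≤ (∑ q, ∑ k ∈ Finset.Icc 1 L, r^(L-k) * ((L:ℝ)⁻¹ *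
          (∑ s, ∑ j, ⟪had (f' q s j (xs q i k)) (xs q i k - onesV d), v q i k - x⟫_ℝ)))
        + (Q:ℝ) * ((n:ℝ) * β * R^2 / 2) := hchain1
    _ ≤ ((∑ k ∈ Finset.Icc 1 L, r^(L-k) *
          ∑ q, ∑ j, ⟪(L:ℝ)⁻¹ • ∑ s, had (f' q s j (xs q j k)) (xs q j k - onesV d), v q i k - x⟫_ℝ)
        + 2*(β+G)*R * ∑ k ∈ Finset.Icc 1 L, ∑ q, ∑ j, ‖v q j k - v q i k‖)
        + (Q:ℝ) * ((n:ℝ) * β * R^2 / 2) := by linarith [hchain2]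
    _ ≤ _ := by
        rw [hE] at *
        linarith
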